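/- Let s be a unitary automorphism of (V,h). Assume that the only s-stable isotropic subspace of V is the zero subspace, and that there is no orthogonal decomposition V = V₁ ⊕ V₂ with V₁ and V₂ both nonzero s-stable subspaces. Let E = K[s] be the K-subalgebra of End_K(V) generated by s (which is a field stable under the adjoint operation f ↦ f†), and let E₊ = {f ∈ E : f† = f}. Then E₊ is a subfield of E, the cardinality of E equals the square of the cardinality of E₊, and the cardinality of E₊ equals q^k for some odd natural number k; that is, E/E₊ is a quadratic extension and the degree of E₊ over the field with q elements is odd. -/

import Mathlib

set_option maxHeartbeats 1000000
set_option synthInstance.maxHeartbeats 1000000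


/-- Under the hypotheses of Lemma `inv` in the paper: `E = K[s]` is stable under the
adjoint, the fixed points `E₊` of the adjoint form a subfield of `E`, `E/E₊` is a
quadratic extension (`|E| = |E₊|²`), and `[E₊ : 𝔽_q]` is odd (`|E₊| = q ^ k` with `k` odd). -/
theorem adjoint_fixed_subfield_quadratic_odd
    (q : ℕ) (hq : IsPrimePow q)
    (K : Type*) [Field K] [Fintype K] (hK : Fintype.card K = q ^ 2)
    (V : Type*) [AddCommGroup V] [Module K V] [FiniteDimensional K V] [Nontrivial V]
    (h : V → V → K)
    (h_add_left : ∀ x x' y : V, h (x + x') y = h x y + h x' y)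
    (h_add_right : ∀ x y y' : V, h x (y + y') = h x y + h x y')
    (h_smul_left : ∀ (c : K) (x y : V), h (c • x) y = c ^ q * h x y)
    (h_smul_right : ∀ (c : K) (x y : V), h x (c • y) = c * h x y)
    (h_symm : ∀ x y : V, h y x = (h x y) ^ q)
    (h_nondeg : ∀ x : V, (∀ y : V, h x y = 0) → x = 0)
    (adj : Module.End K V → Module.End K V)
    (hadj : ∀ (f : Module.End K V) (x y : V), h (f x) y = h x (adj f y))
    (s : V ≃ₗ[K] V)
    (hs : ∀ x y : V, h (s x) (s y) = h x y)
    (hiso : ∀ W : Submodule K V, (∀ w ∈ W, s w ∈ W) →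
      (∀ w ∈ W, ∀ w' ∈ W, h w w' = 0) → W = ⊥)
    (hdec : ¬ ∃ V₁ V₂ : Submodule K V, V₁ ≠ ⊥ ∧ V₂ ≠ ⊥ ∧
      (∀ v ∈ V₁, s v ∈ V₁) ∧ (∀ v ∈ V₂, s v ∈ V₂) ∧ IsCompl V₁ V₂ ∧
      (∀ x ∈ V₁, ∀ y ∈ V₂, h x y = 0)) :
    let E := Algebra.adjoin K {s.toLinearMap}
    let S : Set (Module.End K V) := {f | f ∈ E ∧ adj f = f}
    -- `E₊ = S` is a subfield of the field `E`:
    ((0 : Module.End K V) ∈ S ∧ (1 : Module.End K V) ∈ S ∧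
      (∀ f ∈ S, ∀ g ∈ S, f + g ∈ S) ∧ (∀ f ∈ S, -f ∈ S) ∧
      (∀ f ∈ S, ∀ g ∈ S, f * g ∈ S) ∧
      (∀ f ∈ S, f ≠ 0 → ∃ g ∈ S, f * g = 1)) ∧
    -- `E/E₊` is quadratic:
    Nat.card ↥E = (Nat.card ↥S) ^ 2 ∧
    -- `[E₊ : 𝔽_q]` is odd:
    (∃ k : ℕ, Odd k ∧ Nat.card ↥S = q ^ k) := by
  intro E S
  have hq2 : 2 ≤ q := hq.two_le
  -- basic sesquilinear facts
  have hz_r : ∀ x : V, h x 0 = 0 := by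
    intro x
    have := h_add_right x 0 0
    rw [add_zero] at this
    exact left_eq_add.mp this
  have hz_l : ∀ y : V, h 0 y = 0 := by
    intro y; rw [h_symm, hz_r, zero_pow (by omega)]
  have hnd' : ∀ y : V, (∀ x : V, h x y = 0) → y = 0 := by
    intro y hy
    refine h_nondeg y fun x => ?_
    rw [h_symm, hy, zero_pow (by omega)]
  have hneg_r : ∀ x y : V, h x (-y) = - h x y := by
    intro x y
    have := h_add_right x y (-y)
    rw [add_neg_cancel, hz_r] at this
    exact (neg_eq_of_add_eq_zero_right this.symm).symm
  have hext : ∀ u v : V, (∀ x : V, h x u = h x v) → u = v := by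
    intro u v huv
    have : u - v = 0 := by
      refine hnd' _ fun x => ?_
      rw [sub_eq_add_neg, h_add_right, hneg_r, huv, add_neg_cancel]
    rwa [sub_eq_zero] at this
  have pow_cardK : ∀ c : K, c ^ q ^ 2 = c := by
    intro c; rw [← hK]; exact FiniteField.pow_card c
  -- adjoint basics
  have adj_zero : adj 0 = 0 := by
    ext y
    show adj 0 y = (0 : Module.End K V) y
    refine hext _ _ fun x => ?_
    rw [← hadj]
    show h ((0 : Module.End K V) x) y = h x ((0 : Module.End K V) y)
    simp only [LinearMap.zero_apply, hz_l, hz_r]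
  have adj_one : adj 1 = 1 := by
    ext y
    refine hext _ _ fun x => ?_
    rw [← hadj]; rfl
  have adj_add : ∀ f g, adj (f + g) = adj f + adj g := by
    intro f g; ext y
    refine hext _ _ fun x => ?_
    rw [← hadj]
    show h ((f + g) x) y = h x ((adj f + adj g) y)
    rw [LinearMap.add_apply, LinearMap.add_apply, h_add_left, h_add_right, hadj, hadj]
  have adj_mul : ∀ f g, adj (f * g) = adj g * adj f := by
    intro f g; ext y
    refine hext _ _ fun x => ?_
    rw [← hadj]
    show h ((f * g) x) y = h x ((adj g * adj f) y)
    rw [Module.End.mul_apply, Module.End.mul_apply, hadj, hadj]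
  have adj_smul : ∀ (c : K) f, adj (c • f) = c ^ q • adj f := by
    intro c f; ext y
    refine hext _ _ fun x => ?_
    rw [← hadj]
    show h ((c • f) x) y = h x ((c ^ q • adj f) y)
    rw [LinearMap.smul_apply, LinearMap.smul_apply, h_smul_left, h_smul_right, hadj]
  have adj_adj : ∀ f, adj (adj f) = f := by
    intro f; ext y
    refine hext _ _ fun x => ?_
    rw [← hadj]
    calc h (adj f x) y = (h y (adj f x)) ^ q := h_symm y (adj f x)
      _ = (h (f y) x) ^ q := by rw [← hadj f y x]
      _ = ((h x (f y)) ^ q) ^ q := by rw [h_symm x (f y)]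
      _ = h x (f y) := by rw [← pow_mul, ← pow_two, pow_cardK]
  have adj_neg : ∀ f, adj (-f) = - adj f := by
    intro f
    have := adj_add f (-f)
    rw [add_neg_cancel, adj_zero] at this
    exact eq_neg_of_add_eq_zero_right this.symm
  -- the generator
  have hT_mem : s.toLinearMap ∈ E := Algebra.self_mem_adjoin_singleton K s.toLinearMap
  have commT : ∀ f ∈ E, Commute s.toLinearMap f := fun f hf =>
    Algebra.commute_of_mem_adjoin_self hf
  have commE : ∀ f ∈ E, ∀ g ∈ E, f * g = g * f := by
    intro f hf g hg
    have hc : Commute f g :=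
      Algebra.commute_of_mem_adjoin_singleton_of_commute hg (commT f hf).symm
    exact hc.eq
  -- finiteness
  haveI : Finite V := Module.finite_of_finite K
  haveI : Finite (Module.End K V) := Finite.of_injective _ LinearMap.coe_injective
  haveI finE : Finite ↥E := Subtype.finite
  haveI finModE : Module.Finite K ↥E := by
    have h1 : Module.Finite K (Subalgebra.toSubmodule E) := inferInstance
    exact h1
  -- s.symm lies in E
  have hT'_mem : (s.symm.toLinearMap : Module.End K V) ∈ E := by
    have hinj : Function.Injective (LinearMap.mulLeft K (⟨s.toLinearMap, hT_mem⟩ : ↥E)) := by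
      intro a b hab
      have : s.toLinearMap * (a : Module.End K V) = s.toLinearMap * (b : Module.End K V) :=
        congrArg Subtype.val hab
      refine Subtype.ext ?_
      ext v
      have := congrArg (fun (f : Module.End K V) => s.symm (f v)) this
      simpa using this
    have hsurj := LinearMap.surjective_of_injective hinj
    obtain ⟨g, hg⟩ := hsurj 1
    have hg' : s.toLinearMap * (g : Module.End K V) = 1 := congrArg Subtype.val hg
    have : (g : Module.End K V) = s.symm.toLinearMap := by
      ext v
      have := congrArg (fun (f : Module.End K V) => f v) hg'
      have h2 : s ((g : Module.End K V) v) = v := this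
      have := congrArg s.symm h2
      simpa using this
    rw [← this]; exact g.2
  have adj_pow : ∀ k : ℕ, adj (s.toLinearMap ^ k) = s.symm.toLinearMap ^ k := by
    intro k
    induction k with
    | zero => simpa using adj_one
    | succ n ih =>
      rw [pow_succ, adj_mul, ih, pow_succ']
      congr 1
      ext y
      refine hext _ _ fun x => ?_
      rw [← hadj]
      show h (s x) y = h x (s.symm y)
      conv_lhs => rw [show y = s (s.symm y) by simp]
      exact hs x (s.symm y)
  have adj_mem : ∀ f ∈ E, adj f ∈ E := by
    intro f hf
    have hf' : f ∈ Algebra.adjoin K {s.toLinearMap} := hf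
    rw [Algebra.adjoin_singleton_eq_range_aeval] at hf'
    obtain ⟨p, rfl⟩ := hf'
    clear hf
    induction p using Polynomial.induction_on' with
    | add p r hp hr =>
      show adj (Polynomial.aeval s.toLinearMap (p + r)) ∈ E
      rw [map_add, adj_add]
      exact add_mem hp hr
    | monomial n a =>
      show adj (Polynomial.aeval s.toLinearMap (Polynomial.monomial n a)) ∈ E
      rw [Polynomial.aeval_monomial, ← Algebra.smul_def, adj_smul, adj_pow]
      exact E.smul_mem (pow_mem hT'_mem n) _
  -- key lemma: f ∈ E with (adj f) * f = 0 must vanish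
  have iso_zero : ∀ f ∈ E, adj f * f = 0 → f = 0 := by
    intro f hf h0
    have hst : ∀ w ∈ LinearMap.range f, s w ∈ LinearMap.range f := by
      rintro w ⟨x, rfl⟩
      refine ⟨s.toLinearMap x, ?_⟩
      show f (s.toLinearMap x) = s (f x)
      have := congrArg (fun (u : Module.End K V) => u x) (commT f hf).eq
      simpa [Module.End.mul_apply] using this.symm
    have hisotr : ∀ w ∈ LinearMap.range f, ∀ w' ∈ LinearMap.range f, h w w' = 0 := by
      rintro w ⟨x, rfl⟩ w' ⟨y, rfl⟩
      rw [hadj]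
      have : adj f (f y) = (0 : Module.End K V) y := by
        rw [← Module.End.mul_apply, h0]
      rw [this]
      exact hz_r x
    have := hiso _ hst hisotr
    exact LinearMap.range_eq_bot.mp this
  -- no nontrivial idempotents
  have idem01 : ∀ e ∈ E, e * e = e → e = 0 ∨ e = 1 := by
    intro e he hee
    have he' : adj e ∈ E := adj_mem e he
    have hsub_mem : (1 : Module.End K V) - adj e ∈ E := sub_mem (one_mem E) he'
    have hsub_mem' : (1 : Module.End K V) - e ∈ E := sub_mem (one_mem E) he
    have adj_sub : ∀ u v, adj (u - v) = adj u - adj v := by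
      intro u v
      rw [sub_eq_add_neg, adj_add, adj_neg, sub_eq_add_neg]
    -- first: e * (1 - adj e) = 0
    have h1 : e * (1 - adj e) = 0 := by
      apply iso_zero _ (mul_mem he hsub_mem)
      have : adj (e * (1 - adj e)) = (1 - e) * adj e := by
        rw [adj_mul, adj_sub, adj_one, adj_adj]
      rw [this]
      have comm1 : adj e * e = e * adj e := commE _ he' _ he
      calc (1 - e) * adj e * (e * (1 - adj e))
          = (1 - e) * (adj e * e) * (1 - adj e) := by noncomm_ring
        _ = (1 - e) * (e * adj e) * (1 - adj e) := by rw [comm1]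
        _ = ((1 - e) * e) * adj e * (1 - adj e) := by noncomm_ring
        _ = 0 := by rw [sub_mul, one_mul, hee, sub_self, zero_mul, zero_mul]
    have he1 : e = e * adj e := by
      have := h1
      rw [mul_sub, mul_one, sub_eq_zero] at this
      exact this
    -- second: adj e * (1 - e) = 0
    have h2 : adj e * (1 - e) = 0 := by
      apply iso_zero _ (mul_mem he' hsub_mem')
      have : adj (adj e * (1 - e)) = (1 - adj e) * e := by
        rw [adj_mul, adj_sub, adj_one, adj_adj]
      rw [this]
      have hee' : adj e * adj e = adj e := by
        rw [← adj_mul, hee]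
      calc (1 - adj e) * e * (adj e * (1 - e))
          = (1 - adj e) * (e * adj e) * (1 - e) := by noncomm_ring
        _ = (1 - adj e) * (adj e * e) * (1 - e) := by rw [commE _ he _ he']
        _ = ((1 - adj e) * adj e) * e * (1 - e) := by noncomm_ring
        _ = 0 := by rw [sub_mul, one_mul, hee', sub_self, zero_mul, zero_mul]
    have he2 : adj e = adj e * e := by
      have := h2
      rw [mul_sub, mul_one, sub_eq_zero] at this
      exact this
    have heq : adj e = e := by
      rw [he2, commE _ he' _ he, ← he1]
    -- now build an orthogonal decomposition
    by_contra hcon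
    push_neg at hcon
    obtain ⟨hne0, hne1⟩ := hcon
    apply hdec
    refine ⟨LinearMap.range e, LinearMap.ker e, ?_, ?_, ?_, ?_, ?_, ?_⟩
    · intro hbot
      exact hne0 (LinearMap.range_eq_bot.mp hbot)
    · intro hbot
      have hinj : Function.Injective e := LinearMap.ker_eq_bot.mp hbot
      apply hne1
      ext v
      have : e (e v) = e v := by
        rw [← Module.End.mul_apply, hee]
      exact hinj this
    · rintro w ⟨x, rfl⟩
      refine ⟨s.toLinearMap x, ?_⟩
      show e (s.toLinearMap x) = s (e x)
      have := congrArg (fun (u : Module.End K V) => u x) (commT e he).eq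
      simpa [Module.End.mul_apply] using this.symm
    · intro w hw
      have hw0 : e w = 0 := hw
      have h3 := congrArg (fun (u : Module.End K V) => u w) (commT e he).eq
      simp only [Module.End.mul_apply] at h3
      show e (s w) = 0
      have h4 : e (s w) = s.toLinearMap (e w) := by
        simpa [Module.End.mul_apply] using h3.symm
      rw [h4, hw0, map_zero]
    · constructor
      · rw [Submodule.disjoint_def]
        rintro x ⟨y, rfl⟩ hk
        have hk' : e (e y) = 0 := hk
        rw [← Module.End.mul_apply, hee] at hk'
        exact hk'
      · rw [codisjoint_iff, eq_top_iff]
        intro x _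
        have hx : x = e x + (x - e x) := by abel
        rw [hx]
        refine Submodule.add_mem_sup ⟨x, rfl⟩ ?_
        show e (x - e x) = 0
        rw [map_sub, ← Module.End.mul_apply, hee, sub_self]
    · rintro x ⟨a, rfl⟩ y hy
      rw [hadj, heq]
      have : e y = 0 := hy
      rw [this, hz_r]
  -- no square-zero elements
  have sqzero : ∀ f ∈ E, f * f = 0 → f = 0 := by
    intro f hf hff
    have hf' : adj f ∈ E := adj_mem f hf
    have ha : f * adj f = 0 := by
      apply iso_zero _ (mul_mem hf hf')
      have : adj (f * adj f) = f * adj f := by rw [adj_mul, adj_adj]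
      rw [this]
      calc f * adj f * (f * adj f) = f * (adj f * f) * adj f := by noncomm_ring
        _ = f * (f * adj f) * adj f := by rw [commE _ hf' _ hf]
        _ = (f * f) * (adj f * adj f) := by noncomm_ring
        _ = 0 := by rw [hff, zero_mul]
    have hf'0 : adj f = 0 := by
      apply iso_zero _ hf'
      rw [adj_adj]
      exact ha
    have := congrArg adj hf'0
    rwa [adj_adj, adj_zero] at this
  -- no nilpotents
  have nilzero : ∀ (k : ℕ) (f : Module.End K V), f ∈ E → f ^ k = 0 → f = 0 := by
    intro k
    induction k using Nat.strong_induction_on with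
    | _ k ih =>
      intro f hf hfk
      match k, hfk with
      | 0, hfk =>
        have h10 : (1 : Module.End K V) = 0 := by rw [← pow_zero f]; exact hfk
        calc f = f * 1 := by rw [mul_one]
          _ = f * 0 := by rw [h10]
          _ = 0 := by rw [mul_zero]
      | 1, hfk => rw [← pow_one f]; exact hfk
      | (n+2), hfk =>
        have hpow : f ^ (n + 1) ∈ E := pow_mem hf _
        have hsq : f ^ (n + 1) * f ^ (n + 1) = 0 := by
          rw [← pow_add]
          have : n + 1 + (n + 1) = (n + 2) + n := by omega
          rw [this, pow_add, hfk, zero_mul]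
        have := sqzero _ hpow hsq
        exact ih (n + 1) (by omega) f hf this
  -- idempotent powers in a finite monoid
  have idem_pow : ∀ f : Module.End K V, ∃ n : ℕ, 1 ≤ n ∧ f ^ n * f ^ n = f ^ n := by
    intro f
    obtain ⟨a, b, hab, heq⟩ := Finite.exists_ne_map_eq_of_infinite fun n : ℕ => f ^ (n + 1)
    wlog hlt : a < b generalizing a b
    · exact this b a hab.symm heq.symm (by omega)
    have step : ∀ m, a + 1 ≤ m → f ^ (m + (b - a)) = f ^ m := by
      intro m hm
      have e1 : m + (b - a) = (m - (a + 1)) + (b + 1) := by omega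
      have e2 : m = (m - (a + 1)) + (a + 1) := by omega
      rw [e1, pow_add, ← heq, ← pow_add, ← e2]
    have claim : ∀ j m, a + 1 ≤ m → f ^ (m + j * (b - a)) = f ^ m := by
      intro j
      induction j with
      | zero => intro m _; simp
      | succ i ih =>
        intro m hm
        have e3 : m + (i + 1) * (b - a) = (m + i * (b - a)) + (b - a) := by ring
        rw [e3, step _ (by omega), ih m hm]
    refine ⟨(a + 1) * (b - a), ?_, ?_⟩
    · have : 1 ≤ b - a := by omega
      exact Nat.one_le_iff_ne_zero.mpr (by positivity)
    · rw [← pow_add]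
      have e4 : (a + 1) * (b - a) + (a + 1) * (b - a)
          = ((a + 1) * (b - a)) + (a + 1) * (b - a) := rfl
      rw [claim (a + 1) ((a + 1) * (b - a)) (Nat.le_mul_of_pos_right _ (by omega))]
  -- every nonzero element of E is invertible in E
  have exists_inv : ∀ f ∈ E, f ≠ 0 → ∃ g ∈ E, f * g = 1 := by
    intro f hf hf0
    obtain ⟨n, hn1, hidem⟩ := idem_pow f
    rcases idem01 (f ^ n) (pow_mem hf n) hidem with h0 | h1
    · exact absurd (nilzero n f hf h0) hf0
    · refine ⟨f ^ (n - 1), pow_mem hf _, ?_⟩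
      rw [← pow_succ']
      have : n - 1 + 1 = n := by omega
      rw [this, h1]
  -- the first bullet: S is a subfield
  have hS0 : (0 : Module.End K V) ∈ S := ⟨zero_mem E, adj_zero⟩
  have hS1 : (1 : Module.End K V) ∈ S := ⟨one_mem E, adj_one⟩
  have hSadd : ∀ f ∈ S, ∀ g ∈ S, f + g ∈ S := by
    rintro f ⟨hfE, hfa⟩ g ⟨hgE, hga⟩
    exact ⟨add_mem hfE hgE, by rw [adj_add, hfa, hga]⟩
  have hSneg : ∀ f ∈ S, -f ∈ S := by
    rintro f ⟨hfE, hfa⟩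
    exact ⟨neg_mem hfE, by rw [adj_neg, hfa]⟩
  have hSmul : ∀ f ∈ S, ∀ g ∈ S, f * g ∈ S := by
    rintro f ⟨hfE, hfa⟩ g ⟨hgE, hga⟩
    exact ⟨mul_mem hfE hgE, by rw [adj_mul, hfa, hga, commE _ hgE _ hfE]⟩
  have hSinv : ∀ f ∈ S, f ≠ 0 → ∃ g ∈ S, f * g = 1 := by
    rintro f ⟨hfE, hfa⟩ hf0
    obtain ⟨g, hgE, hfg⟩ := exists_inv f hfE hf0
    have hadjg : adj g = g := by
      have h5 : adj g * f = 1 := by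
        have := congrArg adj hfg
        rw [adj_mul, adj_one, hfa] at this
        exact this
      calc adj g = adj g * (f * g) := by rw [hfg, mul_one]
        _ = (adj g * f) * g := by rw [mul_assoc]
        _ = g := by rw [h5, one_mul]
    exact ⟨g, ⟨hgE, hadjg⟩, hfg⟩
  refine ⟨⟨hS0, hS1, hSadd, hSneg, hSmul, hSinv⟩, ?_⟩
  classical
  -- Field structure on E
  haveI : Nontrivial ↥E := by
    refine ⟨0, 1, fun h01 => ?_⟩
    obtain ⟨v, hv⟩ := exists_ne (0 : V)
    have := congrArg (fun (x : ↥E) => (x : Module.End K V) v) h01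
    simp only [ZeroMemClass.coe_zero, OneMemClass.coe_one, LinearMap.zero_apply,
      Module.End.one_apply] at this
    exact hv this.symm
  have hIsField : IsField ↥E := by
    refine ⟨exists_pair_ne _, ?_, ?_⟩
    · intro a b
      exact Subtype.ext (commE _ a.2 _ b.2)
    · intro a ha
      have ha' : (a : Module.End K V) ≠ 0 := fun hc => ha (Subtype.ext hc)
      obtain ⟨g, hgE, hfg⟩ := exists_inv _ a.2 ha'
      exact ⟨⟨g, hgE⟩, Subtype.ext hfg⟩
  letI fieldE : Field ↥E := hIsField.toField
  -- the adjoint as a ring automorphism of E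
  let σ' : ↥E ≃+* ↥E :=
    { toFun := fun x => ⟨adj ↑x, adj_mem _ x.2⟩
      invFun := fun x => ⟨adj ↑x, adj_mem _ x.2⟩
      left_inv := fun x => Subtype.ext (adj_adj _)
      right_inv := fun x => Subtype.ext (adj_adj _)
      map_mul' := fun x y => Subtype.ext (by
        show adj (↑x * ↑y) = adj ↑x * adj ↑y
        rw [adj_mul]
        exact commE _ (adj_mem _ y.2) _ (adj_mem _ x.2))
      map_add' := fun x y => Subtype.ext (adj_add _ _) }
  -- a scalar not fixed by the involution
  have hc₀ : ∃ c : K, c ^ q ≠ c := by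
    by_contra hall
    push_neg at hall
    have hqdeg : (Polynomial.X ^ q - Polynomial.X : Polynomial K).natDegree = q := by
      have h1 : (Polynomial.X : Polynomial K).natDegree
          < (Polynomial.X ^ q : Polynomial K).natDegree := by
        rw [Polynomial.natDegree_X_pow, Polynomial.natDegree_X]; omega
      rw [Polynomial.natDegree_sub_eq_left_of_natDegree_lt h1, Polynomial.natDegree_X_pow]
    have hzero : (Polynomial.X ^ q - Polynomial.X : Polynomial K) = 0 := by
      apply Polynomial.eq_zero_of_forall_eval_zero_of_natDegree_lt_card
      · intro c
        simp [hall c]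
      · rw [hqdeg, Cardinal.mk_fintype, hK]
        have hlt : q < q ^ 2 := by nlinarith
        exact_mod_cast hlt
    have hcf := congrArg (fun p => Polynomial.coeff p q) hzero
    simp only [Polynomial.coeff_sub, Polynomial.coeff_X_pow, if_pos rfl,
      Polynomial.coeff_zero, Polynomial.coeff_X_of_ne_one (show q ≠ 1 by omega),
      sub_zero] at hcf
    exact one_ne_zero hcf
  obtain ⟨c₀, hc₀⟩ := hc₀
  -- adjoint of scalars
  have adj_scalar : ∀ c : K,
      adj (algebraMap K (Module.End K V) c) = algebraMap K (Module.End K V) (c ^ q) := by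
    intro c
    ext y
    refine hext _ _ fun x => ?_
    rw [← hadj]
    show h ((algebraMap K (Module.End K V) c) x) y
      = h x ((algebraMap K (Module.End K V) (c ^ q)) y)
    rw [Module.algebraMap_end_apply, Module.algebraMap_end_apply, h_smul_left, h_smul_right]
  have aM_inj : Function.Injective (algebraMap K (Module.End K V)) := by
    intro c c' hcc
    obtain ⟨v, hv⟩ := exists_ne (0 : V)
    have := congrArg (fun (u : Module.End K V) => u v) hcc
    simp only [Module.algebraMap_end_apply] at this
    by_contra hne
    exact hv (by
      have h6 : (c - c') • v = 0 := by rw [sub_smul, this, sub_self]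
      rcases smul_eq_zero.mp h6 with h7 | h7
      · exact absurd (sub_eq_zero.mp h7) hne
      · exact absurd h7 (fun _ => hv h7))
  -- σ' is not the identity
  have σ'_ne : σ' ≠ 1 := by
    intro hid
    have hx₀ : (algebraMap K ↥E c₀ : ↥E) = ⟨algebraMap K (Module.End K V) c₀, E.algebraMap_mem c₀⟩ := rfl
    have := congrArg (fun (u : ↥E ≃+* ↥E) => ((u (algebraMap K ↥E c₀) : ↥E) : Module.End K V)) hid
    have h8 : adj (algebraMap K (Module.End K V) c₀) = algebraMap K (Module.End K V) c₀ := this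
    rw [adj_scalar] at h8
    exact hc₀ (aM_inj h8)
  have σ'_sq : σ' * σ' = 1 := by
    refine RingEquiv.ext fun x => ?_
    show σ' (σ' x) = x
    exact Subtype.ext (adj_adj _)
  haveI : Fact (Nat.Prime 2) := ⟨Nat.prime_two⟩
  have hord : orderOf σ' = 2 := orderOf_eq_prime (by rw [pow_two]; exact σ'_sq) σ'_ne
  -- the subgroup generated by σ'
  let G := Subgroup.zpowers σ'
  haveI finAut : Finite (↥E ≃+* ↥E) :=
    Finite.of_injective (fun (e : ↥E ≃+* ↥E) => (e : ↥E → ↥E)) DFunLike.coe_injective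
  haveI : Fintype G := Fintype.ofFinite G
  haveI : FaithfulSMul G ↥E := by
    refine ⟨fun {g1 g2} hsm => ?_⟩
    refine Subtype.ext (RingEquiv.ext fun x => ?_)
    exact hsm x
  have hfinrank : Module.finrank (FixedPoints.subfield G ↥E) ↥E = 2 := by
    rw [FixedPoints.finrank_eq_card G ↥E]
    rw [← Nat.card_eq_fintype_card]
    show Nat.card (Subgroup.zpowers σ') = 2
    rw [Nat.card_zpowers, hord]
  set S₀ := FixedPoints.subfield G ↥E with hS₀def
  have mem_S₀ : ∀ x : ↥E, x ∈ S₀ ↔ σ' x = x := by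
    intro x
    constructor
    · intro hx
      exact hx ⟨σ', Subgroup.mem_zpowers σ'⟩
    · intro hx g
      obtain ⟨k, hk⟩ := g.2
      have hinv : σ'⁻¹ x = x := by
        calc σ'⁻¹ x = σ'⁻¹ (σ' x) := by rw [hx]
          _ = x := σ'.symm_apply_apply x
      have hfix : ∀ k : ℤ, (σ' ^ k) x = x := by
        intro k
        induction k using Int.induction_on with
        | zero => rfl
        | succ n ihn =>
          rw [zpow_add, zpow_one]
          show (σ' ^ (n : ℤ)) (σ' x) = x
          rw [hx]; exact ihn
        | pred n ihn =>
          rw [zpow_sub_one]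
          show (σ' ^ (-(n : ℤ))) (σ'⁻¹ x) = x
          rw [hinv]; exact ihn
      show (g : ↥E ≃+* ↥E) • x = x
      have hgx : (g : ↥E ≃+* ↥E) x = x := by rw [← hk]; exact hfix k
      exact hgx
  -- cardinalities
  haveI : Fintype ↥E := Fintype.ofFinite ↥E
  haveI : Fintype S₀ := Fintype.ofFinite S₀
  have cardE : Fintype.card ↥E = Fintype.card S₀ ^ 2 := by
    have := Module.card_eq_pow_finrank (K := S₀) (V := ↥E)
    rw [hfinrank] at this
    exact this
  -- S ≃ S₀
  have eSS₀ : ↥S ≃ ↥S₀ := by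
    refine ⟨fun x => ⟨⟨x.1, x.2.1⟩, (mem_S₀ _).2 (Subtype.ext x.2.2)⟩,
      fun y => ⟨y.1.1, y.1.2, congrArg Subtype.val ((mem_S₀ _).1 y.2)⟩, ?_, ?_⟩
    · intro x; rfl
    · intro y; rfl
  have cardS : Nat.card ↥S = Fintype.card S₀ := by
    rw [Nat.card_congr eSS₀, Nat.card_eq_fintype_card]
  have cardE' : Nat.card ↥E = Nat.card ↥S ^ 2 := by
    rw [Nat.card_eq_fintype_card, cardS, cardE]
  refine ⟨cardE', ?_⟩
  -- Part (b): the degree is odd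
  set d := Module.finrank K ↥E with hddef
  have cardEq : Fintype.card ↥E = q ^ (2 * d) := by
    have h10 := Module.card_eq_pow_finrank (K := K) (V := ↥E)
    rw [hK] at h10
    rw [h10, ← pow_mul]
  have hd1 : 1 ≤ d := Module.finrank_pos
  have cardS₀ : Fintype.card S₀ = q ^ d := by
    have h9 : Fintype.card S₀ ^ 2 = (q ^ d) ^ 2 := by
      rw [← cardE, cardEq, ← pow_mul, mul_comm d 2]
    exact Nat.pow_left_injective (by omega) h9
  refine ⟨d, ?_, by rw [cardS, cardS₀]⟩
  by_contra hodd
  rw [Nat.not_odd_iff_even] at hodd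
  obtain ⟨m, hm⟩ := hodd
  set xe : ↥E := algebraMap K ↥E c₀ with hxe
  have hval : (xe : Module.End K V) = algebraMap K (Module.End K V) c₀ := rfl
  have hxe2 : xe ^ (q ^ 2) = xe := by
    apply Subtype.ext
    rw [SubmonoidClass.coe_pow, hval, ← map_pow, pow_cardK]
  have hxed : xe ^ (q ^ d) = xe := by
    have hgen : ∀ (y : ↥E), y ^ (q ^ 2) = y → ∀ j : ℕ, y ^ ((q ^ 2) ^ j) = y := by
      intro y hy j
      induction j with
      | zero => rw [pow_zero, pow_one]
      | succ i ih => rw [pow_succ, pow_mul, ih, hy]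
    have hdq : q ^ d = (q ^ 2) ^ m := by rw [← pow_mul]; congr 1; omega
    rw [hdq]
    exact hgen xe hxe2 m
  let A : Finset ↥E := Finset.univ.filter (fun x => x ^ (q ^ d) = x)
  let B : Finset ↥E := Finset.univ.filter (fun x => σ' x = x)
  have hq2d : 2 ≤ q ^ d := by
    calc 2 = 2 ^ 1 := by norm_num
      _ ≤ q ^ 1 := Nat.pow_le_pow_left hq2 1
      _ ≤ q ^ d := Nat.pow_le_pow_right (by omega) hd1
  have hBA : B ⊆ A := by
    intro x hxB
    rw [Finset.mem_filter] at hxB ⊢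
    refine ⟨Finset.mem_univ _, ?_⟩
    have hxS₀ : x ∈ S₀ := (mem_S₀ x).2 hxB.2
    have h11 : (⟨x, hxS₀⟩ : S₀) ^ (Fintype.card S₀) = ⟨x, hxS₀⟩ := FiniteField.pow_card _
    have h12 := congrArg Subtype.val h11
    rw [SubmonoidClass.coe_pow, cardS₀] at h12
    exact h12
  have hA_le : A.card ≤ q ^ d := by
    set P : Polynomial ↥E := Polynomial.X ^ (q ^ d) - Polynomial.X with hP
    have hPdeg : P.natDegree = q ^ d := by
      have h13 : (Polynomial.X : Polynomial ↥E).natDegree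
          < (Polynomial.X ^ (q ^ d) : Polynomial ↥E).natDegree := by
        rw [Polynomial.natDegree_X_pow, Polynomial.natDegree_X]; omega
      rw [hP, Polynomial.natDegree_sub_eq_left_of_natDegree_lt h13, Polynomial.natDegree_X_pow]
    have hPne : P ≠ 0 := by
      intro h0
      rw [h0, Polynomial.natDegree_zero] at hPdeg
      omega
    have hsub : A ⊆ P.roots.toFinset := by
      intro x hx
      rw [Finset.mem_filter] at hx
      rw [Multiset.mem_toFinset, Polynomial.mem_roots hPne]
      show P.eval x = 0
      rw [hP]
      simp only [Polynomial.eval_sub, Polynomial.eval_pow, Polynomial.eval_X]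
      rw [hx.2, sub_self]
    calc A.card ≤ P.roots.toFinset.card := Finset.card_le_card hsub
      _ ≤ Multiset.card P.roots := Multiset.toFinset_card_le _
      _ ≤ P.natDegree := Polynomial.card_roots' P
      _ = q ^ d := hPdeg
  have hBcard : B.card = q ^ d := by
    have h14 : B.card = Fintype.card {x : ↥E // σ' x = x} := (Fintype.card_subtype _).symm
    rw [h14]
    have e2 : {x : ↥E // σ' x = x} ≃ ↥S₀ := Equiv.subtypeEquivRight (fun x => (mem_S₀ x).symm)
    rw [Fintype.card_congr e2, cardS₀]
  have hAB : A = B := (Finset.eq_of_subset_of_card_le hBA (by rw [hBcard]; exact hA_le)).symm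
  have hxeA : xe ∈ A := Finset.mem_filter.2 ⟨Finset.mem_univ _, hxed⟩
  rw [hAB] at hxeA
  have hfixe : σ' xe = xe := (Finset.mem_filter.1 hxeA).2
  have h15 : adj (algebraMap K (Module.End K V) c₀) = algebraMap K (Module.End K V) c₀ :=
    congrArg Subtype.val hfixe
  rw [adj_scalar] at h15
  exact hc₀ (aM_inj h15)
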